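/- Define ψ : ℝ → ℝ³ by ψ(θ) = a·(-sech(θ), 2 arctan(tanh(θ/2)), 0) with a > 0. Then reparametrized by s = a·tanh(θ), ψ is a unit-speed spacelike plane curve in E₁³ with g(ψ̇, ψ̇) = 1 (derivative with respect to s), whose curvature is κ(s) = a/(a² - s²) for |s| < a, and whose principal normal is timelike. -/

import Mathlib

noncomputable section
open Real

/-- Lorentzian metric of Minkowski 3-space E₁³. -/
def g (u v : ℝ × ℝ × ℝ) : ℝ := -(u.1 * v.1) + u.2.1 * v.2.1 + u.2.2 * v.2.2

/-- Inverse hyperbolic tangent. -/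
def artanh (x : ℝ) : ℝ := Real.log ((1 + x) / (1 - x)) / 2

lemma abs_tanh_lt_one (θ : ℝ) : |Real.tanh θ| < 1 := by
  have hc := Real.cosh_pos θ
  have h1 : Real.cosh θ ^ 2 - Real.sinh θ ^ 2 = 1 := Real.cosh_sq_sub_sinh_sq θ
  rw [Real.tanh_eq_sinh_div_cosh, abs_div, abs_of_pos hc, div_lt_one hc]
  nlinarith [abs_nonneg (Real.sinh θ), sq_abs (Real.sinh θ)]

lemma tanh_artanh {x : ℝ} (hx : |x| < 1) : Real.tanh (_root_.artanh x) = x := by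
  obtain ⟨hx1, hx2⟩ := abs_lt.mp hx
  have hu : (0 : ℝ) < (1 + x) / (1 - x) := by
    apply div_pos <;> linarith
  set E := Real.exp (_root_.artanh x) with hE
  have hEpos : 0 < E := Real.exp_pos _
  have hE2 : E ^ 2 = (1 + x) / (1 - x) := by
    rw [hE, ← Real.exp_nat_mul]
    rw [_root_.artanh]
    rw [show (2 : ℕ) * (Real.log ((1 + x) / (1 - x)) / 2) = Real.log ((1 + x) / (1 - x)) by ring]
    exact Real.exp_log hu
  have hsinh : Real.sinh (_root_.artanh x) = (E - E⁻¹) / 2 := by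
    rw [Real.sinh_eq, Real.exp_neg]
  have hcosh : Real.cosh (_root_.artanh x) = (E + E⁻¹) / 2 := by
    rw [Real.cosh_eq, Real.exp_neg]
  rw [Real.tanh_eq_sinh_div_cosh, hsinh, hcosh]
  have h1x : (1 : ℝ) - x ≠ 0 := by linarith
  have hE2' : E ^ 2 * (1 - x) = 1 + x := by
    field_simp [h1x] at hE2; linarith [hE2]
  field_simp
  nlinarith [hE2', hEpos]

lemma cosh_tanh_eq {θ : ℝ} : Real.cosh θ = (Real.sqrt (1 - Real.tanh θ ^ 2))⁻¹ := by
  have hc := Real.cosh_pos θ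
  have h1 : Real.cosh θ ^ 2 - Real.sinh θ ^ 2 = 1 := Real.cosh_sq_sub_sinh_sq θ
  have ht : Real.tanh θ = Real.sinh θ / Real.cosh θ := Real.tanh_eq_sinh_div_cosh θ
  have h2 : 1 - Real.tanh θ ^ 2 = (Real.cosh θ ^ 2)⁻¹ := by
    rw [ht]; field_simp; exact h1
  rw [h2, Real.sqrt_inv, Real.sqrt_sq hc.le, inv_inv]

/-- Gudermannian identity. -/
lemma gd_eq (θ : ℝ) : 2 * Real.arctan (Real.tanh (θ / 2)) = Real.arcsin (Real.tanh θ) := by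
  set t := Real.tanh (θ / 2) with hT
  have ht : |t| < 1 := _root_.abs_tanh_lt_one _
  obtain ⟨ht1, ht2⟩ := abs_lt.mp ht
  -- tanh θ = 2t/(1+t²)
  have hc := Real.cosh_pos (θ / 2)
  have hsq : Real.cosh (θ/2) ^ 2 - Real.sinh (θ/2) ^ 2 = 1 := Real.cosh_sq_sub_sinh_sq _
  have htanh : Real.tanh θ = 2 * t / (1 + t ^ 2) := by
    have hθ : θ = 2 * (θ / 2) := by ring
    have h1t : (1 : ℝ) + t ^ 2 ≠ 0 := by positivity
    rw [hθ, Real.tanh_eq_sinh_div_cosh, Real.sinh_two_mul, Real.cosh_two_mul, hT,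
      Real.tanh_eq_sinh_div_cosh]
    field_simp
  -- sin (2 arctan t) = 2t/(1+t²)
  have hs : Real.sin (2 * Real.arctan t) = 2 * t / (1 + t ^ 2) := by
    rw [Real.sin_two_mul, Real.sin_arctan, Real.cos_arctan]
    have h1 : Real.sqrt (1 + t ^ 2) * Real.sqrt (1 + t ^ 2) = 1 + t ^ 2 :=
      Real.mul_self_sqrt (by positivity)
    have h2 : Real.sqrt (1 + t ^ 2) ≠ 0 := by positivity
    field_simp
    rw [Real.sq_sqrt (by positivity)]
  have hb : |Real.arctan t| < π / 4 := by
    rw [abs_lt]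
    constructor
    · have := Real.arctan_strictMono (show (-1 : ℝ) < t from ht1)
      rw [Real.arctan_neg, Real.arctan_one] at this
      linarith
    · have := Real.arctan_strictMono ht2
      rw [Real.arctan_one] at this
      linarith
  obtain ⟨hb1, hb2⟩ := abs_lt.mp hb
  have hpi := Real.pi_pos
  rw [htanh, ← hs, Real.arcsin_sin (by linarith) (by linarith)]

theorem stmt9 (a : ℝ) (ha : a > 0)
    (ψ : ℝ → ℝ × ℝ × ℝ)
    (hψ : ∀ θ, ψ θ = a • (-(Real.cosh θ)⁻¹, 2 * Real.arctan (Real.tanh (θ / 2)), (0 : ℝ)))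
    (ψs : ℝ → ℝ × ℝ × ℝ)
    (hrep : ∀ s, ψs s = ψ (_root_.artanh (s / a))) :
    ∀ s, |s| < a →
      g (deriv ψs s) (deriv ψs s) = 1 ∧
      Real.sqrt |g (deriv (deriv ψs) s) (deriv (deriv ψs) s)| = a / (a ^ 2 - s ^ 2) ∧
      g (deriv (deriv ψs) s) (deriv (deriv ψs) s) < 0 := by
  -- closed form F and its derivatives
  set r : ℝ → ℝ := fun s => Real.sqrt (a ^ 2 - s ^ 2) with hr_def
  set F : ℝ → ℝ × ℝ × ℝ := fun s => (-(r s), a * Real.arcsin (s / a), 0) with hF_def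
  set F' : ℝ → ℝ × ℝ × ℝ := fun s => (s / r s, a / r s, 0) with hF'_def
  set F'' : ℝ → ℝ × ℝ × ℝ := fun s => (a ^ 2 / (r s) ^ 3, a * s / (r s) ^ 3, 0) with hF''_def
  have hU : IsOpen {s : ℝ | |s| < a} := by
    have : {s : ℝ | |s| < a} = Set.Ioo (-a) a := by
      ext s; simp [abs_lt]
    rw [this]; exact isOpen_Ioo
  -- basic facts for |s| < a
  have key : ∀ s : ℝ, |s| < a →
      (a ^ 2 - s ^ 2 > 0) ∧ r s > 0 ∧ (r s) ^ 2 = a ^ 2 - s ^ 2 := by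
    intro s hs
    obtain ⟨h1, h2⟩ := abs_lt.mp hs
    have hpos : a ^ 2 - s ^ 2 > 0 := by nlinarith
    exact ⟨hpos, Real.sqrt_pos.mpr hpos, Real.sq_sqrt hpos.le⟩
  -- ψs equals F on the set
  have hψF : ∀ s : ℝ, |s| < a → ψs s = F s := by
    intro s hs
    obtain ⟨hpos, hrp, hr2⟩ := key s hs
    have hx : |s / a| < 1 := by
      rw [abs_div, abs_of_pos ha, div_lt_one ha]; exact hs
    have htanh := tanh_artanh hx
    rw [hrep, hψ, hF_def]
    have hcosh : Real.cosh (_root_.artanh (s / a)) = (Real.sqrt (1 - (s / a) ^ 2))⁻¹ := by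
      rw [cosh_tanh_eq, htanh]
    have hsqrt1 : Real.sqrt (1 - (s / a) ^ 2) = r s / a := by
      rw [hr_def]
      rw [show (1 : ℝ) - (s / a) ^ 2 = (a ^ 2 - s ^ 2) / a ^ 2 by field_simp]
      rw [Real.sqrt_div (by positivity : (0:ℝ) ≤ a ^ 2 - s ^ 2), Real.sqrt_sq ha.le]
    have hgd := gd_eq (_root_.artanh (s / a))
    rw [htanh] at hgd
    simp only [Prod.smul_mk, smul_eq_mul]
    refine Prod.ext ?_ (Prod.ext ?_ ?_) <;> simp only
    · rw [hcosh, hsqrt1]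
      field_simp
    · rw [hgd]
    · simp
  -- derivative facts
  have h0 : ∀ s : ℝ, HasDerivAt (fun x : ℝ => a ^ 2 - x ^ 2) (-(2 * s ^ 1)) s := by
    intro s
    exact (hasDerivAt_pow 2 s).const_sub _
  have hrs : ∀ s : ℝ, |s| < a → HasDerivAt r (-(2 * s ^ 1) / (2 * r s)) s := by
    intro s hs
    exact (h0 s).sqrt (ne_of_gt (key s hs).1)
  have hFderiv : ∀ s : ℝ, |s| < a → HasDerivAt F (F' s) s := by
    intro s hs
    obtain ⟨hpos, hrp, hr2⟩ := key s hs
    have hx : |s / a| < 1 := by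
      rw [abs_div, abs_of_pos ha, div_lt_one ha]; exact hs
    obtain ⟨hx1, hx2⟩ := abs_lt.mp hx
    have c1 : HasDerivAt (fun x : ℝ => -(r x)) (s / r s) s := by
      have := (hrs s hs).neg
      refine this.congr_deriv ?_
      field_simp
    have hsqrt1 : Real.sqrt (1 - (s / a) ^ 2) = r s / a := by
      rw [hr_def]
      rw [show (1 : ℝ) - (s / a) ^ 2 = (a ^ 2 - s ^ 2) / a ^ 2 by field_simp]
      rw [Real.sqrt_div (by positivity : (0:ℝ) ≤ a ^ 2 - s ^ 2), Real.sqrt_sq ha.le]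
    have c2 : HasDerivAt (fun x : ℝ => a * Real.arcsin (x / a)) (a / r s) s := by
      have hinner : HasDerivAt (fun x : ℝ => x / a) (1 / a) s := by
        simpa using (hasDerivAt_id s).div_const a
      have harc := (Real.hasDerivAt_arcsin (by intro h; rw [h] at hx1; linarith)
        (by intro h; rw [h] at hx2; linarith)).comp s hinner
      have := harc.const_mul a
      refine this.congr_deriv ?_
      rw [hsqrt1]
      field_simp
    have c3 : HasDerivAt (fun _ : ℝ => (0 : ℝ)) (0 : ℝ) s := hasDerivAt_const s 0
    exact HasDerivAt.prodMk c1 (HasDerivAt.prodMk c2 c3)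
  have hF'deriv : ∀ s : ℝ, |s| < a → HasDerivAt F' (F'' s) s := by
    intro s hs
    obtain ⟨hpos, hrp, hr2⟩ := key s hs
    have hne : r s ≠ 0 := ne_of_gt hrp
    have c1 : HasDerivAt (fun x : ℝ => x / r x) (a ^ 2 / (r s) ^ 3) s := by
      have := (hasDerivAt_id s).div (hrs s hs) hne
      refine this.congr_deriv ?_
      field_simp
      simp only [id_eq]; linear_combination hr2
    have c2 : HasDerivAt (fun x : ℝ => a / r x) (a * s / (r s) ^ 3) s := by
      have := ((hasDerivAt_const s a).div (hrs s hs) hne)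
      refine this.congr_deriv ?_
      field_simp
      ring
    have c3 : HasDerivAt (fun _ : ℝ => (0 : ℝ)) (0 : ℝ) s := hasDerivAt_const s 0
    exact HasDerivAt.prodMk c1 (HasDerivAt.prodMk c2 c3)
  -- main proof
  intro s hs
  obtain ⟨hpos, hrp, hr2⟩ := key s hs
  have hmem : {s : ℝ | |s| < a} ∈ nhds s := hU.mem_nhds hs
  have heq1 : ψs =ᶠ[nhds s] F := Filter.eventuallyEq_of_mem hmem hψF
  have hderiv_eq : ∀ s' : ℝ, |s'| < a → deriv ψs s' = F' s' := by
    intro s' hs'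
    have hmem' : {s : ℝ | |s| < a} ∈ nhds s' := hU.mem_nhds hs'
    have heq1' : ψs =ᶠ[nhds s'] F := Filter.eventuallyEq_of_mem hmem' hψF
    rw [heq1'.deriv_eq]
    exact (hFderiv s' hs').deriv
  have hd1 : deriv ψs s = F' s := hderiv_eq s hs
  have heq2 : deriv ψs =ᶠ[nhds s] F' := Filter.eventuallyEq_of_mem hmem hderiv_eq
  have hd2 : deriv (deriv ψs) s = F'' s := by
    rw [heq2.deriv_eq]
    exact (hF'deriv s hs).deriv
  rw [hd1, hd2]
  have hg1 : g (F' s) (F' s) = 1 := by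
    simp only [hF'_def, g]
    field_simp
    linear_combination (-1 : ℝ) * hr2
  have hg2 : g (F'' s) (F'' s) = -(a ^ 2 / (a ^ 2 - s ^ 2) ^ 2) := by
    simp only [hF''_def, g]
    have h6 : (r s) ^ 6 = (a ^ 2 - s ^ 2) ^ 3 := by
      rw [show (6 : ℕ) = 2 * 3 by norm_num, pow_mul, hr2]
    have e1 : -(a ^ 2 / (r s) ^ 3 * (a ^ 2 / (r s) ^ 3)) +
        a * s / (r s) ^ 3 * (a * s / (r s) ^ 3) + 0 * 0 =
        (a ^ 2 * s ^ 2 - a ^ 4) / (r s) ^ 6 := by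
      field_simp
      ring
    rw [e1, h6]
    field_simp
    ring
  refine ⟨hg1, ?_, ?_⟩
  · have hlt : -(a ^ 2 / (a ^ 2 - s ^ 2) ^ 2) < 0 := by
      have : 0 < a ^ 2 / (a ^ 2 - s ^ 2) ^ 2 := by positivity
      linarith
    rw [hg2, abs_of_neg hlt, neg_neg, ← div_pow,
      Real.sqrt_sq (div_nonneg ha.le hpos.le)]
  · rw [hg2]
    have : 0 < a ^ 2 / (a ^ 2 - s ^ 2) ^ 2 := by positivity
    linarith
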